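/- For every 3-dimensional isotropic subspace U ⊆ V, the common kernel L_U = {x ∈ Ŵ : u·x = 0 for all u ∈ U} is a one-dimensional subspace of Ŵ. -/

import Mathlib

namespace SSD

noncomputable section

/-- `V` is the 7-dimensional complex vector space `ℂ^7`. -/
abbrev V7 : Type := Fin 7 → ℂ

/-- `Ŵ` is the 8-dimensional spin space, with basis (in this order):
`1, v̂₅, v̂₆, v̂₇, v̂₅v̂₆, v̂₆v̂₇, v̂₅v̂₇, v̂₅v̂₆v̂₇`. -/
abbrev W8 : Type := Fin 8 → ℂ

/-- The constant `1/√2` as a complex number. -/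
def is2 : ℂ := ((Real.sqrt 2 : ℝ) : ℂ)⁻¹

/-- The Clifford action of `v ∈ V` on `x ∈ Ŵ`:  `e₅,e₆,e₇` act by exterior
multiplication by `v̂₅,v̂₆,v̂₇`; `e₁,e₂,e₃` act by `−∂/∂v̂₇, ∂/∂v̂₆, −∂/∂v̂₅`;
`e₄` acts by `(1/√2)·(−1)^deg`. Written out in coordinates. -/
def actFun (v : V7) (x : W8) : W8 := fun k =>
  match k with
  | 0 => -(v 0) * x 3 + v 1 * x 2 - v 2 * x 1 + is2 * v 3 * x 0
  | 1 => v 0 * x 6 - v 1 * x 4 - is2 * v 3 * x 1 + v 4 * x 0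
  | 2 => v 0 * x 5 - v 2 * x 4 - is2 * v 3 * x 2 + v 5 * x 0
  | 3 => v 1 * x 5 - v 2 * x 6 - is2 * v 3 * x 3 + v 6 * x 0
  | 4 => -(v 0) * x 7 + is2 * v 3 * x 4 + v 4 * x 2 - v 5 * x 1
  | 5 => -(v 2) * x 7 + is2 * v 3 * x 5 + v 5 * x 3 - v 6 * x 2
  | 6 => -(v 1) * x 7 + is2 * v 3 * x 6 + v 4 * x 3 - v 6 * x 1
  | 7 => -(is2 * v 3) * x 7 + v 4 * x 5 - v 5 * x 6 + v 6 * x 4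

/-- The action `v · x`, packaged as a bilinear map. -/
def act : V7 →ₗ[ℂ] W8 →ₗ[ℂ] W8 :=
  LinearMap.mk₂ ℂ actFun
    (fun m m' n => by funext k; fin_cases k <;> simp [actFun] <;> ring)
    (fun c m n => by funext k; fin_cases k <;> simp [actFun] <;> ring)
    (fun m n n' => by funext k; fin_cases k <;> simp [actFun] <;> ring)
    (fun c m n => by funext k; fin_cases k <;> simp [actFun] <;> ring)

/-- The bilinear form `B` on `V`: `B(eᵢ,eⱼ) = (−1)^(i+1)` if `i+j=8`, else `0`. -/
def Bform (u w : V7) : ℂ :=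
  u 0 * w 6 + u 6 * w 0 - u 1 * w 5 - u 5 * w 1 + u 2 * w 4 + u 4 * w 2 - u 3 * w 3

/-- The quadratic form `Q(v) = B(v,v)/2` on `V`. -/
def Qform (v : V7) : ℂ := Bform v v / 2

/-- The quadratic form `Q̂` on `Ŵ`:
`Q̂ = α_∅α₅₆₇ + α₆α₅₇ − α₇α₅₆ − α₆₇α₅` in the coordinates of the basis above. -/
def Qhat (x : W8) : ℂ := x 0 * x 7 + x 2 * x 6 - x 3 * x 4 - x 5 * x 1

/-- The bilinear form `B̂(p,q) = Q̂(p+q) − Q̂(p) − Q̂(q)` on `Ŵ`. -/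
def Bhat (p q : W8) : ℂ := Qhat (p + q) - Qhat p - Qhat q

/-- A subspace `U ⊆ V` is isotropic if `B` vanishes identically on it. -/
def IsIsotropic (U : Submodule ℂ V7) : Prop :=
  ∀ u ∈ U, ∀ w ∈ U, Bform u w = 0

/-- `L_U = {x ∈ Ŵ | u·x = 0 for all u ∈ U}`. -/
def LU (U : Submodule ℂ V7) : Submodule ℂ W8 :=
  ⨅ u ∈ U, LinearMap.ker (act u)

/-- `ψ : Ŵ → V` is an invariant surjection with spinor `p` if `p ≠ 0`, `ψ(p)=0`
and `ψ(v·p) = v` for all `v ∈ V`. -/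
def IsInvSurj (ψ : W8 →ₗ[ℂ] V7) (p : W8) : Prop :=
  p ≠ 0 ∧ ψ p = 0 ∧ ∀ v : V7, ψ (act v p) = v

lemma is2_sq : is2 * is2 = 2⁻¹ := by
  have h : (Real.sqrt 2 : ℂ) * (Real.sqrt 2 : ℂ) = 2 := by
    rw [← Complex.ofReal_mul, Real.mul_self_sqrt (by norm_num)]
    norm_num
  rw [is2, ← mul_inv, h]

lemma clifford (v w : V7) :
    act v * act w + act w * act v = (-(Bform v w)) • (1 : Module.End ℂ W8) := by
  apply LinearMap.ext
  intro x
  funext k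
  have h2 := is2_sq
  fin_cases k <;>
    simp [act, actFun, Bform, Module.End.mul_apply, LinearMap.mk₂_apply] <;>
    first
      | linear_combination (2 * v 3 * w 3 * x 0) * h2
      | linear_combination (2 * v 3 * w 3 * x 1) * h2
      | linear_combination (2 * v 3 * w 3 * x 2) * h2
      | linear_combination (2 * v 3 * w 3 * x 3) * h2
      | linear_combination (2 * v 3 * w 3 * x 4) * h2
      | linear_combination (2 * v 3 * w 3 * x 5) * h2
      | linear_combination (2 * v 3 * w 3 * x 6) * h2
      | linear_combination (2 * v 3 * w 3 * x 7) * h2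

/-- `Bform` as a bilinear map. -/
def BL : V7 →ₗ[ℂ] V7 →ₗ[ℂ] ℂ :=
  LinearMap.mk₂ ℂ Bform
    (fun m m' n => by simp [Bform]; ring)
    (fun c m n => by simp [Bform]; ring)
    (fun m n n' => by simp [Bform]; ring)
    (fun c m n => by simp [Bform]; ring)

lemma BL_apply (u w : V7) : BL u w = Bform u w := rfl

lemma Bform_comm (u w : V7) : Bform u w = Bform w u := by simp [Bform]; ring

lemma Bform_nondeg {z : V7} (h : ∀ w, Bform z w = 0) : z = 0 := by
  have h0 := h (Pi.single (6 : Fin 7) 1)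
  have h1 := h (Pi.single (5 : Fin 7) 1)
  have h2 := h (Pi.single (4 : Fin 7) 1)
  have h3 := h (Pi.single (3 : Fin 7) 1)
  have h4 := h (Pi.single (2 : Fin 7) 1)
  have h5 := h (Pi.single (1 : Fin 7) 1)
  have h6 := h (Pi.single (0 : Fin 7) 1)
  simp [Bform, Pi.single_apply] at h0 h1 h2 h3 h4 h5 h6
  funext k
  fin_cases k <;> simp_all

lemma exists_dual (u : Fin 3 → V7) (hu : LinearIndependent ℂ u) :
    ∃ y : Fin 3 → V7, ∀ i j, Bform (u i) (y j) = if i = j then 1 else 0 := by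
  classical
  set f : V7 →ₗ[ℂ] (Fin 3 → ℂ) := LinearMap.pi (fun i => BL (u i)) with hf
  have hsurj : Function.Surjective f := by
    by_contra hns
    rw [← LinearMap.range_eq_top] at hns
    obtain ⟨φ, φ0, hker⟩ :=
      (LinearMap.range f).exists_le_ker_of_lt_top (lt_top_iff_ne_top.mpr hns)
    set c : Fin 3 → ℂ := fun i => φ (Pi.single i 1) with hc
    have hφ : ∀ g : Fin 3 → ℂ, φ g = ∑ i, g i * c i := by
      intro g
      rw [LinearMap.pi_apply_eq_sum_univ φ g]
      refine Finset.sum_congr rfl fun i _ => ?_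
      rw [smul_eq_mul, hc]
      congr 1
      congr 1
      funext j
      simp [Pi.single_apply, eq_comm]
    have hz : (∑ i, c i • u i) = 0 := by
      apply Bform_nondeg
      intro w
      have h2 : φ (f w) = 0 := hker ⟨w, rfl⟩
      rw [hφ] at h2
      rw [← BL_apply]
      rw [map_sum]
      rw [LinearMap.sum_apply]
      rw [← h2]
      refine Finset.sum_congr rfl fun i _ => ?_
      simp [hf, BL_apply]
      ring
    have hc0 : ∀ i, c i = 0 := Fintype.linearIndependent_iff.mp hu c hz
    apply φ0
    apply LinearMap.ext
    intro g
    rw [hφ]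
    simp [hc0]
  choose y hy using fun j => hsurj (Pi.single j 1)
  refine ⟨y, fun i j => ?_⟩
  have h := congrFun (hy j) i
  simp [hf, BL_apply, Pi.single_apply] at h
  rw [h]

lemma shift {E : Type*} [Ring E] {p q c : E} (h : p * q + q * p = c) (x : E) :
    q * (p * x) = c * x - p * (q * x) := by
  have hqp : q * p = c - p * q := eq_sub_of_add_eq' h
  rw [← mul_assoc, hqp, sub_mul, mul_assoc]

section EndHelpers

lemma Emul_neg (p q : Module.End ℂ W8) : p * -q = -(p * q) := mul_neg p q
lemma Eneg_mul (p q : Module.End ℂ W8) : -p * q = -(p * q) := neg_mul p q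
lemma Eneg_neg (p : Module.End ℂ W8) : - -p = p := neg_neg p
lemma Emul_assoc (p q r : Module.End ℂ W8) : p * q * r = p * (q * r) := mul_assoc p q r
lemma Ezero_mul (p : Module.End ℂ W8) : 0 * p = 0 := zero_mul p
lemma Emul_zero (p : Module.End ℂ W8) : p * 0 = 0 := mul_zero p
lemma Eneg_zero : -(0 : Module.End ℂ W8) = 0 := neg_zero

end EndHelpers

/-- for every 3-dimensional isotropic subspace `U ⊆ V`, the common
kernel `L_U` is one-dimensional. -/
theorem statement_1 (U : Submodule ℂ V7)
    (hdim : Module.finrank ℂ U = 3) (hiso : IsIsotropic U) :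
    Module.finrank ℂ (LU U) = 1 := by
  classical
  -- a basis of U
  let bU : Module.Basis (Fin 3) ℂ U := Module.finBasisOfFinrankEq ℂ U hdim
  set u : Fin 3 → V7 := fun i => (bU i : V7) with hu_def
  have humem : ∀ i, u i ∈ U := fun i => (bU i).2
  have hulin : LinearIndependent ℂ u :=
    bU.linearIndependent.map' U.subtype (Submodule.ker_subtype U)
  have huu : ∀ i j, Bform (u i) (u j) = 0 := fun i j => hiso _ (humem i) _ (humem j)
  obtain ⟨y0, hy0⟩ := exists_dual u hulin
  -- correct the dual family to be isotropic
  set y : Fin 3 → V7 := fun j => y0 j - ∑ k, (Bform (y0 j) (y0 k) / 2) • u k with hy_def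
  have hby : ∀ i j, Bform (u i) (y j) = if i = j then 1 else 0 := by
    intro i j
    have : Bform (u i) (y j)
        = Bform (u i) (y0 j) - ∑ k, (Bform (y0 j) (y0 k) / 2) * Bform (u i) (u k) := by
      rw [← BL_apply, hy_def, map_sub, map_sum]
      simp [BL_apply]
    rw [this]
    simp [huu, hy0]
  have hyy : ∀ i j, Bform (y i) (y j) = 0 := by
    intro i j
    have expand1 : ∀ w, Bform (y i) w
        = Bform (y0 i) w - ∑ k, (Bform (y0 i) (y0 k) / 2) * Bform (u k) w := by
      intro w
      rw [← BL_apply, hy_def, map_sub, map_sum, LinearMap.sub_apply, LinearMap.sum_apply]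
      simp [BL_apply]
    have e1 : Bform (y0 i) (y j)
        = Bform (y0 i) (y0 j) - ∑ k, (Bform (y0 j) (y0 k) / 2) * Bform (y0 i) (u k) := by
      rw [← BL_apply, hy_def, map_sub, map_sum]
      simp [BL_apply]
    have e2 : ∀ k, Bform (y0 i) (u k) = if k = i then 1 else 0 := by
      intro k
      rw [Bform_comm]
      exact hy0 k i
    rw [expand1 (y j), e1]
    simp only [e2, hby, mul_ite, mul_one, mul_zero]
    rw [Finset.sum_ite_eq' Finset.univ i (fun k => Bform (y0 j) (y0 k) / 2),
        Finset.sum_ite_eq' Finset.univ j (fun k => Bform (y0 i) (y0 k) / 2)]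
    simp only [Finset.mem_univ, if_true]
    linear_combination (Bform_comm (y0 i) (y0 j)) / 2
  -- the endomorphisms
  set a : Fin 3 → Module.End ℂ W8 := fun i => act (u i) with ha_def
  set b : Fin 3 → Module.End ℂ W8 := fun i => act (y i) with hb_def
  have haa : ∀ i j, a i * a j + a j * a i = 0 := by
    intro i j; rw [ha_def]; rw [clifford]; simp [huu]
  have hbb : ∀ i j, b i * b j + b j * b i = 0 := by
    intro i j; rw [hb_def]; rw [clifford]; simp [hyy]
  have hab : ∀ i j, a i * b j + b j * a i = if i = j then (-1 : Module.End ℂ W8) else 0 := by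
    intro i j
    rw [ha_def, hb_def, clifford, hby]
    split_ifs
    · exact neg_one_smul ℂ (1 : Module.End ℂ W8)
    · rw [neg_zero]; exact zero_smul ℂ (1 : Module.End ℂ W8)
  have hhalf : ∀ x : Module.End ℂ W8, x + x = 0 → x = 0 := by
    intro x hx
    have h2 : (2 : ℂ) • x = 0 := by rw [two_smul]; exact hx
    rcases smul_eq_zero.mp h2 with h | h
    · norm_num at h
    · exact h
  have ha2 : ∀ i, a i * a i = 0 := fun i => hhalf _ (haa i i)
  have hb2 : ∀ i, b i * b i = 0 := fun i => hhalf _ (hbb i i)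
  -- commutation shift rules
  have sba : ∀ i j, i ≠ j → ∀ x, b j * (a i * x) = -(a i * (b j * x)) := by
    intro i j hij x
    have h := shift (hab i j) x
    rw [if_neg hij] at h
    simpa using h
  have sba' : ∀ i j, i ≠ j → b j * a i = -(a i * b j) := by
    intro i j hij
    have h := sba i j hij 1
    simpa using h
  have saa : ∀ i j x, a j * (a i * x) = -(a i * (a j * x)) := by
    intro i j x
    have h := shift (haa i j) x
    simpa using h
  have sbaq : ∀ i x, b i * (a i * x) = -x - a i * (b i * x) := by
    intro i x
    have h := shift (hab i i) x
    rw [if_pos rfl] at h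
    exact h.trans (congrArg (· - a i * (b i * x)) (neg_one_mul x))
  -- the projections
  set n : Fin 3 → Module.End ℂ W8 := fun i => -(a i * b i) with hn_def
  have hni : ∀ i, n i = -(a i * b i) := fun i => by rw [hn_def]
  set T : Module.End ℂ W8 := n 0 * (n 1 * n 2) with hT_def
  -- trace facts
  have τ1 : LinearMap.trace ℂ W8 1 = 8 := by
    rw [LinearMap.trace_one]
    norm_num [Module.finrank_pi]
  have hcyc : ∀ x y : Module.End ℂ W8,
      LinearMap.trace ℂ W8 (x * y) = LinearMap.trace ℂ W8 (y * x) :=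
    fun x y => LinearMap.trace_mul_comm ℂ x y
  have τab : ∀ i, LinearMap.trace ℂ W8 (a i * b i) = -4 := by
    intro i
    have h := congrArg (LinearMap.trace ℂ W8) (hab i i)
    rw [if_pos rfl, map_add, map_neg, τ1, hcyc (b i) (a i)] at h
    linear_combination h / 2
  have key2 : ∀ i j, i ≠ j → (b i * (a j * b j)) * a i
      = -(a j * b j) - a i * (b i * (a j * b j)) := by
    intro i j hij
    calc (b i * (a j * b j)) * a i
        = b i * (a j * (b j * a i)) := by rw [Emul_assoc, Emul_assoc]
      _ = b i * (a j * (-(a i * b j))) := by rw [sba' i j hij]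
      _ = -(b i * (a j * (a i * b j))) := by rw [Emul_neg, Emul_neg]
      _ = -(b i * (-(a i * (a j * b j)))) := congrArg (fun z => -(b i * z)) (saa i j (b j))
      _ = b i * (a i * (a j * b j)) := by rw [Emul_neg, Eneg_neg]
      _ = -(a j * b j) - a i * (b i * (a j * b j)) := sbaq i (a j * b j)
  have τ2 : ∀ i j, i ≠ j →
      LinearMap.trace ℂ W8 (a i * (b i * (a j * b j))) = 2 := by
    intro i j hij
    have h := hcyc (a i) (b i * (a j * b j))
    rw [key2 i j hij, map_sub, map_neg, τab j] at h
    linear_combination h / 2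
  have key3 : (b 0 * (a 1 * (b 1 * (a 2 * b 2)))) * a 0
      = -(a 1 * (b 1 * (a 2 * b 2))) - a 0 * (b 0 * (a 1 * (b 1 * (a 2 * b 2)))) := by
    calc (b 0 * (a 1 * (b 1 * (a 2 * b 2)))) * a 0
        = b 0 * (a 1 * (b 1 * (a 2 * (b 2 * a 0)))) := by rw [Emul_assoc, Emul_assoc, Emul_assoc, Emul_assoc]
      _ = b 0 * (a 1 * (b 1 * (a 2 * (-(a 0 * b 2))))) := by rw [sba' 0 2 (by decide)]
      _ = -(b 0 * (a 1 * (b 1 * (a 2 * (a 0 * b 2))))) := by rw [Emul_neg, Emul_neg, Emul_neg, Emul_neg]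
      _ = -(b 0 * (a 1 * (b 1 * (-(a 0 * (a 2 * b 2)))))) :=
            congrArg (fun z => -(b 0 * (a 1 * (b 1 * z)))) (saa 0 2 (b 2))
      _ = b 0 * (a 1 * (b 1 * (a 0 * (a 2 * b 2)))) := by rw [Emul_neg, Emul_neg, Emul_neg, Eneg_neg]
      _ = b 0 * (a 1 * (-(a 0 * (b 1 * (a 2 * b 2))))) := by
            rw [sba 0 1 (by decide) (a 2 * b 2)]
      _ = -(b 0 * (a 1 * (a 0 * (b 1 * (a 2 * b 2))))) := by rw [Emul_neg, Emul_neg]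
      _ = -(b 0 * (-(a 0 * (a 1 * (b 1 * (a 2 * b 2)))))) :=
            congrArg (fun z => -(b 0 * z)) (saa 0 1 (b 1 * (a 2 * b 2)))
      _ = b 0 * (a 0 * (a 1 * (b 1 * (a 2 * b 2)))) := by rw [Emul_neg, Eneg_neg]
      _ = -(a 1 * (b 1 * (a 2 * b 2)))
            - a 0 * (b 0 * (a 1 * (b 1 * (a 2 * b 2)))) := sbaq 0 _
  have τ3 : LinearMap.trace ℂ W8 (a 0 * (b 0 * (a 1 * (b 1 * (a 2 * b 2))))) = -1 := by
    have h := hcyc (a 0) (b 0 * (a 1 * (b 1 * (a 2 * b 2))))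
    rw [key3, map_sub, map_neg, τ2 1 2 (by decide)] at h
    linear_combination h / 2
  have hTtrace : LinearMap.trace ℂ W8 T = 1 := by
    have hTeq : T = -(a 0 * (b 0 * (a 1 * (b 1 * (a 2 * b 2))))) := by
      rw [hT_def, hni 0, hni 1, hni 2]
      rw [Eneg_mul, Emul_neg, Eneg_mul, Eneg_neg]
      exact congrArg Neg.neg ((mul_assoc (a 0) (b 0) _).trans
        (congrArg (fun z => a 0 * (b 0 * z)) (mul_assoc (a 1) (b 1) _)))
    rw [hTeq, map_neg, τ3]
    norm_num
  -- T is a projection onto LU U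
  have han : ∀ i, a i * n i = 0 := by
    intro i
    rw [hni i, Emul_neg, ← Emul_assoc, ha2 i, Ezero_mul, Eneg_zero]
  have hanc : ∀ i j, i ≠ j → a i * n j = n j * a i := by
    intro i j hij
    have hab' : a i * b j = -(b j * a i) := by
      rw [sba' i j hij, Eneg_neg]
    calc a i * n j = -(a i * (a j * b j)) := by rw [hni j, Emul_neg]
      _ = a j * (a i * b j) := (congrArg Neg.neg (saa j i (b j))).trans (Eneg_neg _)
      _ = a j * (-(b j * a i)) := by rw [hab']
      _ = -((a j * b j) * a i) := by rw [Emul_neg, Emul_assoc]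
      _ = n j * a i := by rw [hni j, Eneg_mul]
  have haT : ∀ i, a i * T = 0 := by
    intro i
    fin_cases i
    · calc a 0 * T = (a 0 * n 0) * (n 1 * n 2) := by rw [hT_def, ← Emul_assoc]
        _ = 0 := by rw [han 0, Ezero_mul]
    · calc a 1 * T = (a 1 * n 0) * (n 1 * n 2) := by rw [hT_def, ← Emul_assoc]
        _ = (n 0 * a 1) * (n 1 * n 2) := by rw [hanc 1 0 (by decide)]
        _ = n 0 * ((a 1 * n 1) * n 2) := by rw [Emul_assoc, ← Emul_assoc (a 1)]
        _ = 0 := by rw [han 1, Ezero_mul, Emul_zero]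
    · calc a 2 * T = (a 2 * n 0) * (n 1 * n 2) := by rw [hT_def, ← Emul_assoc]
        _ = (n 0 * a 2) * (n 1 * n 2) := by rw [hanc 2 0 (by decide)]
        _ = n 0 * ((a 2 * n 1) * n 2) := by rw [Emul_assoc, ← Emul_assoc (a 2)]
        _ = n 0 * ((n 1 * a 2) * n 2) := by rw [hanc 2 1 (by decide)]
        _ = n 0 * (n 1 * (a 2 * n 2)) := by rw [Emul_assoc (n 1)]
        _ = 0 := by rw [han 2, Emul_zero, Emul_zero]
  have hspan : ∀ v ∈ U, ∃ r : Fin 3 → ℂ, v = ∑ i, r i • u i := by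
    intro v hv
    refine ⟨fun i => bU.repr ⟨v, hv⟩ i, ?_⟩
    have h := bU.sum_repr ⟨v, hv⟩
    have h2 := congrArg (Submodule.subtype U) h
    simp only [map_sum, map_smul] at h2
    exact h2.symm
  have hmemLU : ∀ x : W8, x ∈ LU U ↔ ∀ i, a i x = 0 := by
    intro x
    constructor
    · intro hx i
      have h1 := (Submodule.mem_iInf _).mp hx (u i)
      have h2 := (Submodule.mem_iInf _).mp h1 (humem i)
      exact LinearMap.mem_ker.mp h2
    · intro h
      refine (Submodule.mem_iInf _).mpr fun v => (Submodule.mem_iInf _).mpr fun hv => ?_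
      obtain ⟨r, rfl⟩ := hspan v hv
      rw [LinearMap.mem_ker, map_sum]
      simp only [map_smul]
      rw [LinearMap.sum_apply]
      simp only [LinearMap.smul_apply]
      have hai : ∀ i, act (u i) x = 0 := h
      simp [hai]
  have hproj : LinearMap.IsProj (LU U) T := by
    constructor
    · intro x
      rw [hmemLU]
      intro i
      have h : a i (T x) = (a i * T) x := rfl
      rw [h, haT i]
      rfl
    · intro x hx
      have hx' := (hmemLU x).mp hx
      have hnx : ∀ i, n i x = x := by
        intro i
        have h := LinearMap.congr_fun (hab i i) x
        rw [if_pos rfl] at h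
        simp only [LinearMap.add_apply, Module.End.mul_apply, LinearMap.neg_apply,
          Module.End.one_apply] at h
        rw [hx' i, map_zero, add_zero] at h
        show (-(a i * b i)) x = x
        rw [LinearMap.neg_apply, Module.End.mul_apply, h, neg_neg]
      calc T x = n 0 (n 1 (n 2 x)) := rfl
        _ = x := by rw [hnx 2, hnx 1, hnx 0]
  have htr := hproj.trace
  rw [hTtrace] at htr
  exact_mod_cast htr.symm

end
end SSD
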